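/- Let Y be a real symmetric positive semi-definite n×n matrix with eigendecomposition Y = Φ Σ_Y Φᵀ, where Φ is orthogonal and Σ_Y = diag(σ_{1,Y}, …, σ_{n,Y}) with σ_{i,Y} ≥ 0. Let α > 0 and Σ_{U₀}² = diag(σ_{1,0}, …, σ_{n,0}) with σ_{i,0} ≥ 0, and let W(t) be the unique solution of Ẇ = WY + YW − 2W² with W(0) = α Φ Σ_{U₀}² Φᵀ. If σ_{i,0} > 0 for every index i with σ_{i,Y} > 0, then W(t) → Y entrywise as t → ∞. -/

import Mathlib

open scoped Matrix.Norms.L2Operator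
open scoped Matrix

noncomputable def wfun (D W0 t : ℝ) : ℝ :=
  if D = 0 then W0 / (1 + 2 * W0 * t)
  else D * W0 * Real.exp (2 * D * t) / (D + W0 * (Real.exp (2 * D * t) - 1))

lemma wfun_zero (D W0 : ℝ) : wfun D W0 0 = W0 := by
  unfold wfun
  split_ifs with h
  · simp
  · simp [h]

lemma wfun_den_pos {D W0 : ℝ} (hD : 0 < D) (hW0 : 0 ≤ W0) {t : ℝ} (ht : 0 ≤ t) :
    0 < D + W0 * (Real.exp (2 * D * t) - 1) := by
  have h1 : (1:ℝ) ≤ Real.exp (2 * D * t) := by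
    rw [← Real.exp_zero]
    exact Real.exp_le_exp.mpr (by positivity)
  nlinarith

lemma wfun_nonneg {D W0 : ℝ} (hD : 0 ≤ D) (hW0 : 0 ≤ W0) {t : ℝ} (ht : 0 ≤ t) :
    0 ≤ wfun D W0 t := by
  unfold wfun
  split_ifs with h
  · have : (0:ℝ) ≤ 1 + 2 * W0 * t := by positivity
    positivity
  · have hD' : 0 < D := lt_of_le_of_ne hD (Ne.symm h)
    have := wfun_den_pos hD' hW0 ht
    positivity

lemma wfun_hasDerivAt {D W0 : ℝ} (hD : 0 ≤ D) (hW0 : 0 ≤ W0) {t : ℝ} (ht : 0 ≤ t) :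
    HasDerivAt (wfun D W0) (2 * D * wfun D W0 t - 2 * wfun D W0 t ^ 2) t := by
  rcases eq_or_lt_of_le hD with h0 | hD'
  · -- D = 0
    have hden : 1 + 2 * W0 * t ≠ 0 := by positivity
    have hnum : HasDerivAt (fun _ : ℝ => W0) 0 t := hasDerivAt_const _ _
    have hden' : HasDerivAt (fun s : ℝ => 1 + 2 * W0 * s) (2 * W0) t := by
      simpa using ((hasDerivAt_id t).const_mul (2 * W0)).const_add 1
    have := hnum.div hden' hden
    have hw : wfun 0 W0 = fun s => W0 / (1 + 2 * W0 * s) := by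
      funext s; simp [wfun]
    rw [← h0, hw]
    refine this.congr_deriv ?_
    beta_reduce
    field_simp
    ring
  · -- D > 0
    have hden := wfun_den_pos hD' hW0 ht
    have hDne : D ≠ 0 := ne_of_gt hD'
    have hE : HasDerivAt (fun s : ℝ => Real.exp (2 * D * s)) (2 * D * Real.exp (2 * D * t)) t := by
      simpa [mul_comm] using (((hasDerivAt_id t).const_mul (2 * D)).exp)
    have hnum : HasDerivAt (fun s : ℝ => D * W0 * Real.exp (2 * D * s))
        (D * W0 * (2 * D * Real.exp (2 * D * t))) t := hE.const_mul _
    have hdenD : HasDerivAt (fun s : ℝ => D + W0 * (Real.exp (2 * D * s) - 1))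
        (W0 * (2 * D * Real.exp (2 * D * t))) t := by
      simpa using (((hE.sub_const 1).const_mul W0).const_add D)
    have hq := hnum.div hdenD (ne_of_gt hden)
    have hw : wfun D W0 = fun s =>
        D * W0 * Real.exp (2 * D * s) / (D + W0 * (Real.exp (2 * D * s) - 1)) := by
      funext s; simp [wfun, hDne]
    rw [hw]
    refine hq.congr_deriv ?_
    have hEt : Real.exp (2 * D * t) ≠ 0 := Real.exp_ne_zero _
    beta_reduce
    field_simp

lemma wfun_tendsto {D W0 : ℝ} (hD : 0 ≤ D) (hW0 : 0 ≤ W0) (hpos : 0 < D → 0 < W0) :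
    Filter.Tendsto (wfun D W0) Filter.atTop (nhds D) := by
  rcases eq_or_lt_of_le hD with h0 | hD'
  · -- D = 0
    subst h0
    have hw : wfun 0 W0 = fun s => W0 / (1 + 2 * W0 * s) := by
      funext s; simp [wfun]
    rw [hw]
    rcases eq_or_lt_of_le hW0 with hW | hW
    · subst hW; simp
    · have hden : Filter.Tendsto (fun s : ℝ => 1 + 2 * W0 * s) Filter.atTop Filter.atTop := by
        apply Filter.tendsto_atTop_add_const_left
        exact Filter.Tendsto.const_mul_atTop (by positivity) Filter.tendsto_id
      simpa using Filter.Tendsto.div_atTop tendsto_const_nhds hden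
  · -- D > 0
    have hW : 0 < W0 := hpos hD'
    have key : ∀ t : ℝ, 0 ≤ t → wfun D W0 t
        = D * W0 / ((D - W0) * Real.exp (-(2 * D * t)) + W0) := by
      intro t ht
      have hden := wfun_den_pos hD' hW.le ht
      have hEt : (0:ℝ) < Real.exp (2 * D * t) := Real.exp_pos _
      have hne : D ≠ 0 := ne_of_gt hD'
      rw [wfun, if_neg hne, Real.exp_neg]
      rw [div_eq_div_iff (ne_of_gt hden)]
      · field_simp
        ring
      · have : (D - W0) * (Real.exp (2*D*t))⁻¹ + W0
            = (D + W0 * (Real.exp (2*D*t) - 1)) / Real.exp (2*D*t) := by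
          field_simp; ring
        rw [this]
        positivity
    have hlim : Filter.Tendsto (fun t => D * W0 / ((D - W0) * Real.exp (-(2 * D * t)) + W0))
        Filter.atTop (nhds D) := by
      have hexp : Filter.Tendsto (fun t : ℝ => Real.exp (-(2 * D * t))) Filter.atTop (nhds 0) := by
        apply Real.tendsto_exp_atBot.comp
        exact Filter.tendsto_neg_atBot_iff.mpr
          (Filter.Tendsto.const_mul_atTop (by positivity) Filter.tendsto_id)
      have hden : Filter.Tendsto (fun t : ℝ => (D - W0) * Real.exp (-(2 * D * t)) + W0)
          Filter.atTop (nhds W0) := by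
        simpa using ((hexp.const_mul (D - W0)).add_const W0)
      have heq : D * W0 / W0 = D := mul_div_cancel_right₀ D (ne_of_gt hW)
      have h3 := Filter.Tendsto.div (tendsto_const_nhds (x := D * W0)) hden (ne_of_gt hW)
      rwa [heq] at h3
    refine hlim.congr' ?_
    filter_upwards [Filter.eventually_ge_atTop 0] with t ht
    exact (key t ht).symm


section Aux

variable {n : ℕ}

lemma conj_entry (Φ : Matrix (Fin n) (Fin n) ℝ) (f : Fin n → ℝ) (i j : Fin n) :
    (Φ * Matrix.diagonal f * Φᵀ) i j = ∑ k, f k * (Φ i k * Φ j k) := by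
  rw [Matrix.mul_apply]
  congr 1; funext k
  rw [Matrix.mul_diagonal, Matrix.transpose_apply]
  ring

lemma conj_sum_smul (Φ : Matrix (Fin n) (Fin n) ℝ) (f : Fin n → ℝ) :
    Φ * Matrix.diagonal f * Φᵀ
      = ∑ k, f k • (Φ * Matrix.diagonal (Pi.single k 1) * Φᵀ) := by
  ext i j
  rw [conj_entry, Matrix.sum_apply]
  congr 1; funext k
  rw [Matrix.smul_apply, conj_entry]
  simp [Pi.single_apply]

lemma conj_mul' (Φ A B : Matrix (Fin n) (Fin n) ℝ) (h : Φᵀ * Φ = 1) :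
    (Φ * A * Φᵀ) * (Φ * B * Φᵀ) = Φ * (A * B) * Φᵀ := by
  calc (Φ * A * Φᵀ) * (Φ * B * Φᵀ) = Φ * A * ((Φᵀ * Φ) * (B * Φᵀ)) := by
        simp only [mul_assoc]
    _ = Φ * (A * B) * Φᵀ := by rw [h, one_mul]; simp only [mul_assoc]

end Aux


lemma conj_comb {n : ℕ} (Φ A B C : Matrix (Fin n) (Fin n) ℝ) :
    Φ * A * Φᵀ + Φ * B * Φᵀ - 2 * (Φ * C * Φᵀ) = Φ * (A + B - 2 * C) * Φᵀ := by
  noncomm_ring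

/-- **Convergence under spectral initialization.** With `Y = Φ diag(d) Φᵀ` PSD
(`Φ` orthogonal, `d i ≥ 0`), let `W` be the solution of `Ẇ = WY + YW - 2W²` with the
spectral initialization `W(0) = α Φ diag(σ₀) Φᵀ` (`α > 0`, `σ₀ᵢ ≥ 0`). If `σ₀ᵢ > 0`
for every `i` with `d i > 0`, then `W(t) → Y` entrywise as `t → ∞`. -/
theorem spectral_initialization_convergence
    (n : ℕ)
    (Φ : Matrix (Fin n) (Fin n) ℝ) (hΦ : Φ * Φᵀ = 1 ∧ Φᵀ * Φ = 1)
    (d : Fin n → ℝ) (hd : ∀ i, 0 ≤ d i)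
    (Y : Matrix (Fin n) (Fin n) ℝ) (hY : Y = Φ * Matrix.diagonal d * Φᵀ)
    (σ0 : Fin n → ℝ) (hσ0 : ∀ i, 0 ≤ σ0 i)
    (α : ℝ) (hα : 0 < α)
    (W : ℝ → Matrix (Fin n) (Fin n) ℝ)
    (hW0 : W 0 = α • (Φ * Matrix.diagonal σ0 * Φᵀ))
    (hWd : ∀ t : ℝ, 0 ≤ t →
      HasDerivWithinAt W (W t * Y + Y * W t - 2 * (W t * W t)) (Set.Ici 0) t)
    (hpos : ∀ i, 0 < d i → 0 < σ0 i) :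
    ∀ i j : Fin n, Filter.Tendsto (fun t => W t i j) Filter.atTop (nhds (Y i j)) := by
  classical
  set w : Fin n → ℝ → ℝ := fun k t => wfun (d k) (α * σ0 k) t with hw
  have hw0k : ∀ k, 0 ≤ α * σ0 k := fun k => mul_nonneg hα.le (hσ0 k)
  set g : ℝ → Matrix (Fin n) (Fin n) ℝ :=
    fun t => Φ * Matrix.diagonal (fun k => w k t) * Φᵀ with hg
  -- derivative of g
  have hgd : ∀ t : ℝ, 0 ≤ t →
      HasDerivAt g (g t * Y + Y * g t - 2 * (g t * g t)) t := by
    intro t ht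
    have h1 : HasDerivAt (fun s => ∑ k, w k s • (Φ * Matrix.diagonal (Pi.single k 1) * Φᵀ))
        (∑ k, (2 * d k * w k t - 2 * w k t ^ 2) •
          (Φ * Matrix.diagonal (Pi.single k 1) * Φᵀ)) t :=
      HasDerivAt.fun_sum fun k _ => (wfun_hasDerivAt (hd k) (hw0k k) ht).smul_const _
    have h2 : (fun s => ∑ k, w k s • (Φ * Matrix.diagonal (Pi.single k 1) * Φᵀ)) = g := by
      funext s; exact (conj_sum_smul Φ (fun k => w k s)).symm
    rw [h2, ← conj_sum_smul Φ (fun k => 2 * d k * w k t - 2 * w k t ^ 2)] at h1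
    convert h1 using 1
    rw [hg, hY]
    simp only []
    rw [conj_mul' Φ _ _ hΦ.2, conj_mul' Φ _ _ hΦ.2, conj_mul' Φ _ _ hΦ.2, conj_comb]
    have hdiag : Matrix.diagonal (fun k => w k t) * Matrix.diagonal d
        + Matrix.diagonal d * Matrix.diagonal (fun k => w k t)
        - 2 * (Matrix.diagonal (fun k => w k t) * Matrix.diagonal (fun k => w k t))
        = Matrix.diagonal (fun k => 2 * d k * w k t - 2 * w k t ^ 2) := by
      rw [Matrix.diagonal_mul_diagonal, Matrix.diagonal_mul_diagonal,
        Matrix.diagonal_mul_diagonal, two_mul, Matrix.diagonal_add, Matrix.diagonal_add,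
        Matrix.diagonal_sub]
      exact congrArg Matrix.diagonal (funext fun k => by ring)
    rw [hdiag]
  -- initial condition for g
  have hg0 : g 0 = W 0 := by
    rw [hW0]
    show Φ * Matrix.diagonal (fun k => w k 0) * Φᵀ = _
    have h0 : (fun k => w k 0) = fun k => α * σ0 k := funext fun k => wfun_zero _ _
    rw [h0]
    have : Matrix.diagonal (fun k => α * σ0 k) = α • Matrix.diagonal σ0 := by
      rw [← Matrix.diagonal_smul]; rfl
    rw [this, Matrix.mul_smul, Matrix.smul_mul]
  -- uniqueness
  have huniq : ∀ T : ℝ, 0 ≤ T → W T = g T := by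
    intro T hT
    have hWT : ContinuousOn W (Set.Icc 0 T) := fun s hs =>
      ((hWd s hs.1).continuousWithinAt).mono Set.Icc_subset_Ici_self
    have hgT : ContinuousOn g (Set.Icc 0 T) := fun s hs =>
      ((hgd s hs.1).continuousAt).continuousWithinAt
    obtain ⟨C₁, hC₁⟩ := (isCompact_Icc).exists_bound_of_continuousOn hWT
    obtain ⟨C₂, hC₂⟩ := (isCompact_Icc).exists_bound_of_continuousOn hgT
    set R := max C₁ C₂ with hR
    have hR0 : 0 ≤ R :=
      le_trans (norm_nonneg (W 0)) ((hC₁ 0 ⟨le_refl 0, hT⟩).trans (le_max_left _ _))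
    have hKc : ((2 * ‖Y‖ + 4 * R).toNNReal : ℝ) = 2 * ‖Y‖ + 4 * R :=
      Real.coe_toNNReal _ (by positivity)
    have hv : ∀ s : ℝ, LipschitzOnWith (2 * ‖Y‖ + 4 * R).toNNReal
        (fun x => x * Y + Y * x - 2 * (x * x)) (Metric.closedBall 0 R) := by
      intro s
      apply LipschitzOnWith.of_dist_le_mul
      intro x hx y hy
      rw [Metric.mem_closedBall, dist_zero_right] at hx hy
      rw [dist_eq_norm, dist_eq_norm, hKc]
      have hre : (x * Y + Y * x - 2 * (x * x)) - (y * Y + Y * y - 2 * (y * y))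
          = (x - y) * Y + Y * (x - y) - x * (x - y) - x * (x - y)
            - (x - y) * y - (x - y) * y := by noncomm_ring
      rw [hre]
      set A := x - y with hA
      have n1 : ‖A * Y‖ ≤ ‖A‖ * ‖Y‖ := norm_mul_le _ _
      have n2 : ‖Y * A‖ ≤ ‖Y‖ * ‖A‖ := norm_mul_le _ _
      have n3 : ‖x * A‖ ≤ ‖x‖ * ‖A‖ := norm_mul_le _ _
      have n4 : ‖A * y‖ ≤ ‖A‖ * ‖y‖ := norm_mul_le _ _
      have e5 := norm_add_le (A * Y) (Y * A)
      have e4 := norm_sub_le (A * Y + Y * A) (x * A)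
      have e3 := norm_sub_le (A * Y + Y * A - x * A) (x * A)
      have e2 := norm_sub_le (A * Y + Y * A - x * A - x * A) (A * y)
      have e1 := norm_sub_le (A * Y + Y * A - x * A - x * A - A * y) (A * y)
      have m1 : ‖x‖ * ‖A‖ ≤ R * ‖A‖ := mul_le_mul_of_nonneg_right hx (norm_nonneg A)
      have m2 : ‖A‖ * ‖y‖ ≤ ‖A‖ * R := mul_le_mul_of_nonneg_left hy (norm_nonneg A)
      nlinarith [norm_nonneg A, norm_nonneg Y]
    have heq := ODE_solution_unique_of_mem_Icc_right
      (v := fun _ x => x * Y + Y * x - 2 * (x * x))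
      (s := fun _ => Metric.closedBall (0 : Matrix (Fin n) (Fin n) ℝ) R)
      (fun s _ => hv s) hWT
      (fun s hs => (hWd s hs.1).mono (Set.Ici_subset_Ici.mpr hs.1))
      (fun s hs => by
        rw [Metric.mem_closedBall, dist_zero_right]
        exact (hC₁ s (Set.Ico_subset_Icc_self hs)).trans (le_max_left _ _))
      hgT
      (fun s hs => ((hgd s hs.1).hasDerivWithinAt))
      (fun s hs => by
        rw [Metric.mem_closedBall, dist_zero_right]
        exact (hC₂ s (Set.Ico_subset_Icc_self hs)).trans (le_max_right _ _))
      hg0.symm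
    exact heq ⟨hT, le_refl T⟩
  -- limit
  intro i j
  have hlim : Filter.Tendsto (fun t => g t i j) Filter.atTop (nhds (Y i j)) := by
    have hent : ∀ t, g t i j = ∑ k, w k t * (Φ i k * Φ j k) := fun t => conj_entry Φ _ i j
    have hYent : Y i j = ∑ k, d k * (Φ i k * Φ j k) := by rw [hY]; exact conj_entry Φ d i j
    rw [hYent]
    simp only [hent]
    apply tendsto_finset_sum
    intro k _
    exact (wfun_tendsto (hd k) (hw0k k)
      (fun hdk => by have := hpos k hdk; positivity)).mul_const _
  apply hlim.congr'
  filter_upwards [Filter.eventually_ge_atTop 0] with t ht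
  rw [huniq t ht]
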